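/- (Frieze–Kannan Regularity Lemma.) For every γ > 0 and every positive integer k₀, there exists a positive integer K (which may be taken of the form k₀ · 2^{poly(1/γ)}) such that every graph Γ on n ≥ K vertices admits a γ-FK-regular equipartition into k classes, where k₀ ≤ k ≤ K. -/

import Mathlib

open Finset
open scoped Classical

noncomputable section

/-- The 0/1 adjacency indicator of a simple graph, as a real number. -/
def adj01 {V : Type*} (G : SimpleGraph V) (u v : V) : ℝ :=
  if G.Adj u v then 1 else 0

/-- The normalized edit distance between two graphs on the same finite vertex set:
`|E(Γ) △ E(Γ')| / |V|²`, counting ordered pairs. -/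
def editDist {V : Type*} [Fintype V] (G H : SimpleGraph V) : ℝ :=
  (∑ u : V, ∑ v : V, |adj01 G u v - adj01 H u v|) / (Fintype.card V : ℝ) ^ 2

/-- The distance from a graph to a set of graphs on the same vertex set. -/
def distToSet {V : Type*} [Fintype V] (G : SimpleGraph V) (P : Set (SimpleGraph V)) : ℝ :=
  sInf (editDist G '' P)

/-- `φ` is an induced homomorphism from `F` to `G`: it preserves adjacency and
non-adjacency. -/
def IsInducedHom {α β : Type*} (F : SimpleGraph α) (G : SimpleGraph β) (φ : α → β) : Prop :=
  ∀ u v : α, u ≠ v → (F.Adj u v ↔ G.Adj (φ u) (φ v))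

/-- The induced homomorphism density of `F` in `G`: the fraction of all maps
`V(F) → V(G)` that are induced homomorphisms. -/
def homDensity {α β : Type*} [Fintype α] [Fintype β] (F : SimpleGraph α) (G : SimpleGraph β) :
    ℝ :=
  ((Finset.univ.filter fun φ : α → β => IsInducedHom F G φ).card : ℝ) /
    (Fintype.card (α → β) : ℝ)

/-- A family of finite simple graphs: for each number of vertices, a set of graphs. -/
abbrev GraphFamily := ∀ m : ℕ, Set (SimpleGraph (Fin m))

/-- A graph property: for each number of vertices, a set of graphs. -/
abbrev GraphProperty := ∀ n : ℕ, Set (SimpleGraph (Fin n))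

/-- `G` has no induced subgraph isomorphic to a member of the family `F`. -/
def InForb (F : GraphFamily) {n : ℕ} (G : SimpleGraph (Fin n)) : Prop :=
  ∀ (m : ℕ) (F' : SimpleGraph (Fin m)), F' ∈ F m →
    ¬ ∃ φ : Fin m → Fin n, Function.Injective φ ∧ IsInducedHom F' G φ

/-- The hereditary graph property `Forb(F)` of graphs with no induced copy of a member
of `F`. -/
def Forb (F : GraphFamily) : GraphProperty := fun _n => {G | InForb F G}

/-- A weighted graph on `V`: a symmetric function `V × V → [0,1]` (loops allowed). -/
structure WeightedGraph (V : Type*) where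
  w : V → V → ℝ
  symm : ∀ u v, w u v = w v u
  nonneg : ∀ u v, 0 ≤ w u v
  le_one : ∀ u v, w u v ≤ 1

/-- The normalized ℓ₁-distance `d₁` between two weighted graphs on the same vertex set. -/
def d1 {V : Type*} [Fintype V] (R S : WeightedGraph V) : ℝ :=
  (∑ u : V, ∑ v : V, |R.w u v - S.w u v|) / (Fintype.card V : ℝ) ^ 2

/-- The cut-distance between two weighted graphs on the same vertex set. -/
def dCut {V : Type*} [Fintype V] (R S : WeightedGraph V) : ℝ :=
  sSup { d : ℝ | ∃ α β : V → ℝ,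
    (∀ v, α v ∈ Set.Icc (0 : ℝ) 1) ∧ (∀ v, β v ∈ Set.Icc (0 : ℝ) 1) ∧
    d = |∑ x : V, ∑ y : V, α x * (R.w x y - S.w x y) * β y| / (Fintype.card V : ℝ) ^ 2 }

/-- A simple graph viewed as a weighted graph with 0/1 weights. -/
def toWeighted {V : Type*} (G : SimpleGraph V) : WeightedGraph V where
  w := adj01 G
  symm := fun _ _ => by simp [adj01, SimpleGraph.adj_comm]
  nonneg := fun _ _ => by unfold adj01; split <;> norm_num
  le_one := fun _ _ => by unfold adj01; split <;> norm_num

/-- The class of index `i` in the partition of `Fin n` encoded by `p : Fin n → Fin k`. -/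
def cls {n k : ℕ} (p : Fin n → Fin k) (i : Fin k) : Finset (Fin n) :=
  Finset.univ.filter fun v => p v = i

/-- `p` encodes an equipartition: any two class sizes differ by at most one. -/
def IsEquipartition {n k : ℕ} (p : Fin n → Fin k) : Prop :=
  ∀ i j : Fin k, (cls p i).card ≤ (cls p j).card + 1

/-- The number of ordered pairs `(u,v) ∈ A × B` with `u` adjacent to `v`. -/
def pairCount {V : Type*} (G : SimpleGraph V) (A B : Finset V) : ℕ :=
  ∑ u ∈ A, ∑ v ∈ B, if G.Adj u v then 1 else 0

lemma pairCount_symm {V : Type*} (G : SimpleGraph V) (A B : Finset V) :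
    pairCount G A B = pairCount G B A := by
  unfold pairCount
  rw [Finset.sum_comm]
  exact Finset.sum_congr rfl fun v _ => Finset.sum_congr rfl fun u _ => by
    simp [SimpleGraph.adj_comm]

lemma pairCount_le {V : Type*} (G : SimpleGraph V) (A B : Finset V) :
    pairCount G A B ≤ A.card * B.card := by
  unfold pairCount
  calc ∑ u ∈ A, ∑ v ∈ B, (if G.Adj u v then 1 else 0)
      ≤ ∑ u ∈ A, ∑ _v ∈ B, 1 := by
        refine Finset.sum_le_sum fun _ _ => Finset.sum_le_sum fun _ _ => ?_
        split <;> omega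
    _ = A.card * B.card := by simp [Finset.sum_const, smul_eq_mul]

/-- The reduced graph `Γ/𝒱` of `G` with respect to the partition encoded by `p`. -/
def reduced {n k : ℕ} (G : SimpleGraph (Fin n)) (p : Fin n → Fin k) :
    WeightedGraph (Fin k) where
  w i j := (pairCount G (cls p i) (cls p j) : ℝ) /
    (((cls p i).card : ℝ) * ((cls p j).card : ℝ))
  symm i j := by
    try dsimp only
    rw [pairCount_symm, mul_comm]
  nonneg i j := by positivity
  le_one i j := by
    have h : (pairCount G (cls p i) (cls p j) : ℝ) ≤
        ((cls p i).card : ℝ) * ((cls p j).card : ℝ) := by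
      exact_mod_cast pairCount_le G (cls p i) (cls p j)
    exact div_le_one_of_le₀ h (by positivity)

/-- The blown-up reduced graph `Γ_𝒱`. -/
def blowup {n k : ℕ} (G : SimpleGraph (Fin n)) (p : Fin n → Fin k) :
    WeightedGraph (Fin n) where
  w u v := (reduced G p).w (p u) (p v)
  symm _ _ := (reduced G p).symm _ _
  nonneg _ _ := (reduced G p).nonneg _ _
  le_one _ _ := (reduced G p).le_one _ _

/-- The partition encoded by `p` is `γ`-FK-regular for `G`. -/
def IsFKRegular {n k : ℕ} (G : SimpleGraph (Fin n)) (p : Fin n → Fin k) (γ : ℝ) : Prop :=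
  dCut (toWeighted G) (blowup G p) ≤ γ

/-- `G ∈ Red₂(S)`: `G` admits an equipartition into `|V(S)|` classes whose reduced graph
is within `d₁`-distance `2/|V(S)|` of `S`. -/
def InRed2 {k : ℕ} (S : WeightedGraph (Fin k)) {n : ℕ} (G : SimpleGraph (Fin n)) : Prop :=
  ∃ p : Fin n → Fin k, IsEquipartition p ∧ d1 (reduced G p) S ≤ 2 / (k : ℝ)

/-- `S ∈ P*_ε`: every graph in `Red₂(S)` is `ε`-close to `P`. -/
def InStar (P : GraphProperty) (ε : ℝ) {k : ℕ} (S : WeightedGraph (Fin k)) : Prop :=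
  ∀ (n : ℕ) (G : SimpleGraph (Fin n)), InRed2 S G → distToSet G (P n) ≤ ε

/-- The set of numbers `d₁(Γ/𝒱, S)` over all equipartitions `𝒱` of `Γ` into at most `K`
classes and all weighted graphs `S ∈ P*_ε` on the corresponding vertex set. -/
def dhatSet (P : GraphProperty) (ε : ℝ) (K : ℕ) {n : ℕ} (G : SimpleGraph (Fin n)) :
    Set ℝ :=
  { d : ℝ | ∃ k, 1 ≤ k ∧ k ≤ K ∧ ∃ p : Fin n → Fin k, IsEquipartition p ∧
      ∃ S : WeightedGraph (Fin k), InStar P ε S ∧ d = d1 (reduced G p) S }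

/-- `d̂_{K,ε,P}(Γ)`: the minimum over reduced graphs `R` of `Γ` (with at most `K` classes)
of the distance from `R` to `P*_ε`. -/
def dhat (P : GraphProperty) (ε : ℝ) (K : ℕ) {n : ℕ} (G : SimpleGraph (Fin n)) : ℝ :=
  sInf (dhatSet P ε K G)

/-- A graph property `P` is `f`-attestable. -/
def Attestable (P : GraphProperty) (f : ℝ → ℕ) : Prop :=
  ∀ ε : ℝ, 0 < ε → ∀ (n : ℕ) (G : SimpleGraph (Fin n)), G ∈ P n →
    (f ε : ℝ) ^ ((3 : ℝ) / 2) ≤ (n : ℝ) →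
    ∃ k, 1 ≤ k ∧ k ≤ f ε ∧ ∃ p : Fin n → Fin k, IsEquipartition p ∧
      InStar P ε (reduced G p)

/-- The subgraph induced by a vertex subset `X` of size `s`, as a graph on `Fin s`
(via the order isomorphism `Fin s ≃o X`); junk value if `|X| ≠ s`. -/
def sampleGraph {n : ℕ} (G : SimpleGraph (Fin n)) (s : ℕ) (X : Finset (Fin n)) :
    SimpleGraph (Fin s) :=
  if h : X.card = s then SimpleGraph.comap (fun i => ((X.orderIsoOfFin h) i).1) G else ⊥

/-- With probability at least `2/3`, a uniformly random `s`-element vertex subset `X`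
of `G` satisfies `|g(G[X]) - value| ≤ ε`. -/
def EstimatesAt {n : ℕ} (G : SimpleGraph (Fin n)) (s : ℕ) (g : SimpleGraph (Fin s) → ℝ)
    (value ε : ℝ) : Prop :=
  (2 : ℝ) / 3 ≤
    ((((Finset.univ : Finset (Fin n)).powersetCard s).filter fun X =>
        |g (sampleGraph G s X) - value| ≤ ε).card : ℝ) /
      (((Finset.univ : Finset (Fin n)).powersetCard s).card : ℝ)

/-- Relabelling a weighted graph along a bijection of vertex sets. -/
def WeightedGraph.relabel {V W : Type*} (σ : V ≃ W) (R : WeightedGraph W) :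
    WeightedGraph V where
  w u v := R.w (σ u) (σ v)
  symm _ _ := R.symm _ _
  nonneg _ _ := R.nonneg _ _
  le_one _ _ := R.le_one _ _

/-- The weight of a map on an unordered pair of vertices. -/
def pairWeight {α V : Type*} (R : WeightedGraph V) (φ : α → V) : Sym2 α → ℝ :=
  Sym2.lift ⟨fun u v => R.w (φ u) (φ v), fun u v => R.symm (φ u) (φ v)⟩

/-- The induced homomorphism weight `hom_φ(F,R)` of a map `φ : V(F) → V(R)`. -/
def homWeight {α V : Type*} [Fintype α] (F : SimpleGraph α) (R : WeightedGraph V)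
    (φ : α → V) : ℝ :=
  (∏ e ∈ Finset.univ.filter fun e : Sym2 α => e ∈ F.edgeSet, pairWeight R φ e) *
    ∏ e ∈ Finset.univ.filter fun e : Sym2 α => ¬ e.IsDiag ∧ e ∉ F.edgeSet,
      (1 - pairWeight R φ e)

/-- The induced homomorphism density of a graph `F` in a weighted graph `R`: the average
of `hom_φ(F,R)` over all maps `φ : V(F) → V(R)`. -/
def homW {α V : Type*} [Fintype α] [Fintype V] (F : SimpleGraph α) (R : WeightedGraph V) :
    ℝ :=
  (∑ φ : α → V, homWeight F R φ) / (Fintype.card (α → V) : ℝ)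

/-! ### Auxiliary lemmas for the Frieze–Kannan regularity lemma -/

open Finset in
lemma aux_abs_sum_weight_le {V : Type*} [Fintype V] (g : V → ℝ) (α : V → ℝ)
    (hα : ∀ v, α v ∈ Set.Icc (0:ℝ) 1) :
    ∃ S : Finset V, |∑ x, α x * g x| ≤ |∑ x ∈ S, g x| := by
  rcases le_or_gt 0 (∑ x, α x * g x) with h | h
  · refine ⟨univ.filter fun x => 0 ≤ g x, ?_⟩
    have h1 : ∑ x, α x * g x ≤ ∑ x ∈ univ.filter (fun x => 0 ≤ g x), g x := by
      rw [← Finset.sum_filter_add_sum_filter_not univ (fun x => 0 ≤ g x) (fun x => α x * g x)]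
      have h2 : ∑ x ∈ univ.filter (fun x => ¬ 0 ≤ g x), α x * g x ≤ 0 :=
        Finset.sum_nonpos fun x hx => mul_nonpos_of_nonneg_of_nonpos (hα x).1
          (le_of_lt (lt_of_not_ge (Finset.mem_filter.1 hx).2))
      have h3 : ∑ x ∈ univ.filter (fun x => 0 ≤ g x), α x * g x
          ≤ ∑ x ∈ univ.filter (fun x => 0 ≤ g x), g x :=
        Finset.sum_le_sum fun x hx =>
          mul_le_of_le_one_left (Finset.mem_filter.1 hx).2 (hα x).2
      linarith
    rw [abs_of_nonneg h]
    exact h1.trans (le_abs_self _)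
  · refine ⟨univ.filter fun x => g x < 0, ?_⟩
    have h1 : ∑ x ∈ univ.filter (fun x => g x < 0), g x ≤ ∑ x, α x * g x := by
      rw [← Finset.sum_filter_add_sum_filter_not univ (fun x => g x < 0) (fun x => α x * g x)]
      have h2 : (0:ℝ) ≤ ∑ x ∈ univ.filter (fun x => ¬ g x < 0), α x * g x :=
        Finset.sum_nonneg fun x hx =>
          mul_nonneg (hα x).1 (le_of_not_gt (Finset.mem_filter.1 hx).2)
      have h3 : ∑ x ∈ univ.filter (fun x => g x < 0), g x
          ≤ ∑ x ∈ univ.filter (fun x => g x < 0), α x * g x := by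
        refine Finset.sum_le_sum fun x hx => ?_
        have hg := (Finset.mem_filter.1 hx).2
        nlinarith [(hα x).1, (hα x).2]
      linarith
    rw [abs_of_neg h]
    calc -∑ x, α x * g x ≤ -∑ x ∈ univ.filter (fun x => g x < 0), g x := by linarith
      _ ≤ |∑ x ∈ univ.filter (fun x => g x < 0), g x| := neg_le_abs _

open Finset in
lemma aux_abs_bilinear_le {V : Type*} [Fintype V] (D : V → V → ℝ) (c : ℝ)
    (hc : ∀ S T : Finset V, |∑ x ∈ S, ∑ y ∈ T, D x y| ≤ c)
    (α β : V → ℝ) (hα : ∀ v, α v ∈ Set.Icc (0:ℝ) 1) (hβ : ∀ v, β v ∈ Set.Icc (0:ℝ) 1) :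
    |∑ x, ∑ y, α x * D x y * β y| ≤ c := by
  obtain ⟨S, hS⟩ := aux_abs_sum_weight_le (fun x => ∑ y, β y * D x y) α hα
  obtain ⟨T, hT⟩ := aux_abs_sum_weight_le (fun y => ∑ x ∈ S, D x y) β hβ
  have hrw : ∀ x, ∑ y, α x * D x y * β y = α x * ∑ y, β y * D x y := by
    intro x; rw [Finset.mul_sum]; exact Finset.sum_congr rfl fun y _ => by ring
  have hrw2 : ∑ x ∈ S, ∑ y, β y * D x y = ∑ y, β y * ∑ x ∈ S, D x y := by
    rw [Finset.sum_comm]; exact Finset.sum_congr rfl fun y _ => by rw [Finset.mul_sum]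
  calc |∑ x, ∑ y, α x * D x y * β y| = |∑ x, α x * ∑ y, β y * D x y| := by
        rw [Finset.sum_congr rfl fun x _ => hrw x]
    _ ≤ |∑ x ∈ S, ∑ y, β y * D x y| := hS
    _ = |∑ y, β y * ∑ x ∈ S, D x y| := by rw [hrw2]
    _ ≤ |∑ y ∈ T, ∑ x ∈ S, D x y| := hT
    _ = |∑ x ∈ S, ∑ y ∈ T, D x y| := by rw [Finset.sum_comm]
    _ ≤ c := hc S T

lemma aux_pairCount_eq_interedges {V : Type*} [DecidableEq V] (G : SimpleGraph V)
    [DecidableRel G.Adj] (A B : Finset V) :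
    pairCount G A B = (Rel.interedges G.Adj A B).card := by
  unfold pairCount
  rw [Rel.interedges, Finset.card_filter, Finset.sum_product]
  refine Finset.sum_congr rfl fun u _ => Finset.sum_congr rfl fun v _ => ?_
  by_cases h : G.Adj u v <;> simp [h]

lemma aux_sum_adj01 {V : Type*} (G : SimpleGraph V) (A B : Finset V) :
    ∑ x ∈ A, ∑ y ∈ B, adj01 G x y = (pairCount G A B : ℝ) := by
  unfold pairCount adj01
  push_cast
  refine Finset.sum_congr rfl fun u _ => Finset.sum_congr rfl fun v _ => ?_
  by_cases h : G.Adj u v <;> simp [h]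

lemma aux_crude_bound {V : Type*} (G : SimpleGraph V) (A B : Finset V) (δ : ℝ)
    (h0 : 0 ≤ δ) (h1 : δ ≤ 1) :
    |∑ x ∈ A, ∑ y ∈ B, (adj01 G x y - δ)| ≤ (A.card : ℝ) * B.card := by
  have hsum : ∑ x ∈ A, ∑ y ∈ B, (adj01 G x y - δ)
      = (pairCount G A B : ℝ) - (A.card : ℝ) * B.card * δ := by
    rw [← aux_sum_adj01]
    rw [Finset.sum_congr rfl fun x (_ : x ∈ A) =>
      Finset.sum_sub_distrib (s := B) (fun y => adj01 G x y) (fun _ => δ)]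
    rw [Finset.sum_sub_distrib]
    simp [Finset.sum_const, mul_assoc]
  have hpc0 : (0:ℝ) ≤ (pairCount G A B : ℝ) := Nat.cast_nonneg _
  have hpc1 : (pairCount G A B : ℝ) ≤ (A.card : ℝ) * B.card := by
    exact_mod_cast pairCount_le G A B
  have hab : (0:ℝ) ≤ (A.card : ℝ) * B.card := by positivity
  rw [hsum, abs_le]
  constructor <;> nlinarith

lemma aux_edgeDensity_mul {V : Type*} [DecidableEq V] (G : SimpleGraph V)
    [DecidableRel G.Adj] {A B : Finset V} (hA : A.Nonempty) (hB : B.Nonempty) :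
    (pairCount G A B : ℝ) = ((G.edgeDensity A B : ℚ) : ℝ) * A.card * B.card := by
  rw [aux_pairCount_eq_interedges, SimpleGraph.edgeDensity, Rel.edgeDensity]
  have hA0 : (A.card : ℝ) ≠ 0 := by positivity
  have hB0 : (B.card : ℝ) ≠ 0 := by positivity
  push_cast
  field_simp

lemma aux_uniform_pair_bound {V : Type*} [DecidableEq V] (G : SimpleGraph V)
    [DecidableRel G.Adj] {ε : ℝ} (hε : 0 < ε) {C D A B : Finset V}
    (hA : A ⊆ C) (hB : B ⊆ D) (hu : G.IsUniform ε C D) :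
    |∑ x ∈ A, ∑ y ∈ B, (adj01 G x y - ((G.edgeDensity C D : ℚ) : ℝ))|
      ≤ ε * C.card * D.card := by
  have hδ0 : (0:ℝ) ≤ ((G.edgeDensity C D : ℚ) : ℝ) := by
    exact_mod_cast Rel.edgeDensity_nonneg _ _ _
  have hδ1 : ((G.edgeDensity C D : ℚ) : ℝ) ≤ 1 := by
    exact_mod_cast Rel.edgeDensity_le_one _ _ _
  have hac : (A.card : ℝ) ≤ C.card := by exact_mod_cast Finset.card_le_card hA
  have hbd : (B.card : ℝ) ≤ D.card := by exact_mod_cast Finset.card_le_card hB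
  by_cases hbig : (C.card : ℝ) * ε ≤ A.card ∧ (D.card : ℝ) * ε ≤ B.card
  · rcases A.eq_empty_or_nonempty with rfl | hAne
    · simp only [Finset.sum_empty, abs_zero]
      positivity
    rcases B.eq_empty_or_nonempty with rfl | hBne
    · simp only [Finset.sum_empty, Finset.sum_const_zero, abs_zero]
      positivity
    have key := hu hA hB hbig.1 hbig.2
    have hsum : ∑ x ∈ A, ∑ y ∈ B, (adj01 G x y - ((G.edgeDensity C D : ℚ) : ℝ))
        = ((A.card : ℝ) * B.card) *
          (((G.edgeDensity A B : ℚ) : ℝ) - ((G.edgeDensity C D : ℚ) : ℝ)) := by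
      rw [Finset.sum_congr rfl fun x (_ : x ∈ A) => Finset.sum_sub_distrib (s := B)
        (fun y => adj01 G x y) (fun _ => ((G.edgeDensity C D : ℚ) : ℝ))]
      rw [Finset.sum_sub_distrib, aux_sum_adj01, aux_edgeDensity_mul G hAne hBne]
      simp [Finset.sum_const]
      ring
    rw [hsum, abs_mul]
    have h1 : |((A.card : ℝ) * B.card)| = (A.card : ℝ) * B.card := abs_of_nonneg (by positivity)
    rw [h1]
    calc (A.card : ℝ) * B.card *
          |((G.edgeDensity A B : ℚ) : ℝ) - ((G.edgeDensity C D : ℚ) : ℝ)|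
        ≤ (C.card : ℝ) * D.card * ε := by
          have hca : (0:ℝ) ≤ (A.card : ℝ) := Nat.cast_nonneg _
          have hcb : (0:ℝ) ≤ (B.card : ℝ) := Nat.cast_nonneg _
          have habs : |((G.edgeDensity A B : ℚ) : ℝ) - ((G.edgeDensity C D : ℚ) : ℝ)| ≤ ε :=
            le_of_lt key
          have hstep : (A.card : ℝ) * B.card *
              |((G.edgeDensity A B : ℚ) : ℝ) - ((G.edgeDensity C D : ℚ) : ℝ)|
              ≤ (A.card : ℝ) * B.card * ε :=
            mul_le_mul_of_nonneg_left habs (by positivity)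
          have hstep2 : (A.card : ℝ) * B.card ≤ (C.card : ℝ) * D.card :=
            mul_le_mul hac hbd hcb (hca.trans hac)
          nlinarith [hε.le]
      _ = ε * C.card * D.card := by ring
  · have hcrude := aux_crude_bound G A B _ hδ0 hδ1
    refine hcrude.trans ?_
    rw [not_and_or] at hbig
    push_neg at hbig
    have hca : (0:ℝ) ≤ (A.card : ℝ) := Nat.cast_nonneg _
    have hcb : (0:ℝ) ≤ (B.card : ℝ) := Nat.cast_nonneg _
    rcases hbig with hsmall | hsmall
    · nlinarith
    · nlinarith

set_option maxHeartbeats 1000000 in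
/-- Frieze–Kannan Regularity Lemma. For every `γ > 0` and `k₀ ≥ 1`
there is `K` such that every graph on `n ≥ K` vertices admits a `γ`-FK-regular
equipartition into `k` classes with `k₀ ≤ k ≤ K`. -/
theorem frieze_kannan_regularity (γ : ℝ) (hγ : 0 < γ) (k₀ : ℕ) (hk₀ : 0 < k₀) :
    ∃ K : ℕ, 0 < K ∧
      ∀ (n : ℕ), K ≤ n → ∀ Γ : SimpleGraph (Fin n),
        ∃ k, k₀ ≤ k ∧ k ≤ K ∧
          ∃ p : Fin n → Fin k, IsEquipartition p ∧ IsFKRegular Γ p γ := by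
  classical
  set ε : ℝ := γ / 10 with hεdef
  have hε : 0 < ε := by positivity
  set l : ℕ := max k₀ ⌈(8:ℝ)/γ⌉₊ with hldef
  have hl8 : (8:ℝ)/γ ≤ l := by
    refine le_trans (Nat.le_ceil _) ?_
    exact_mod_cast Nat.cast_le.2 (le_max_right _ _)
  have hlk₀ : k₀ ≤ l := le_max_left _ _
  refine ⟨SzemerediRegularity.bound ε l, SzemerediRegularity.bound_pos ε l, ?_⟩
  intro n hn Γ
  haveI : DecidableRel Γ.Adj := Classical.decRel _
  have hn0 : 0 < n := lt_of_lt_of_le (SzemerediRegularity.bound_pos ε l) hn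
  have hln : l ≤ Fintype.card (Fin n) := by
    rw [Fintype.card_fin]; exact le_trans (SzemerediRegularity.le_bound ε l) hn
  obtain ⟨P, hPequi, hPl, hPcard, hPuni⟩ := szemeredi_regularity Γ hε hln
  set k := P.parts.card with hkdef
  have hlk : l ≤ k := hPl
  have hk0 : 0 < k := lt_of_lt_of_le (lt_of_lt_of_le hk₀ hlk₀) hlk
  -- enumeration of the parts
  set e : {x // x ∈ P.parts} ≃ Fin k := P.parts.equivFin with hedef
  set p : Fin n → Fin k := fun v => e ⟨P.part v, P.part_mem.2 (Finset.mem_univ v)⟩ with hpdef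
  have hcls : ∀ i, cls p i = ((e.symm i : {x // x ∈ P.parts}) : Finset (Fin n)) := by
    intro i
    ext v
    simp only [cls, Finset.mem_filter, Finset.mem_univ, true_and]
    constructor
    · rintro rfl
      have h2 : e.symm (p v) = ⟨P.part v, P.part_mem.2 (Finset.mem_univ v)⟩ :=
        Equiv.symm_apply_apply e _
      rw [h2]
      exact P.mem_part (Finset.mem_univ v)
    · intro hv
      have h1 : P.part v = ((e.symm i : {x // x ∈ P.parts}) : Finset (Fin n)) :=
        P.part_eq_of_mem (e.symm i).2 hv
      have h2 : (⟨P.part v, P.part_mem.2 (Finset.mem_univ v)⟩ : {x // x ∈ P.parts}) = e.symm i :=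
        Subtype.ext h1
      show e ⟨P.part v, P.part_mem.2 (Finset.mem_univ v)⟩ = i
      rw [h2, Equiv.apply_symm_apply]
  have hclsinj : Function.Injective (fun i => cls p i) := by
    intro i j hij
    simp only [hcls] at hij
    have := e.symm.injective (Subtype.ext hij)
    exact this
  have hclsmem : ∀ i, cls p i ∈ P.parts := fun i => by rw [hcls]; exact (e.symm i).2
  have hclsne : ∀ i, 0 < (cls p i).card :=
    fun i => Finset.card_pos.2 (P.nonempty_of_mem_parts (hclsmem i))
  have hequip : IsEquipartition p :=
    fun i j => hPequi (Finset.mem_coe.2 (hclsmem i)) (Finset.mem_coe.2 (hclsmem j))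
  have hsizes : ∑ i, (cls p i).card = n := by
    have h := Finset.sum_fiberwise (Finset.univ : Finset (Fin n)) p (fun _ => (1:ℕ))
    simp only [Finset.sum_const, smul_eq_mul, mul_one, Finset.card_univ, Fintype.card_fin] at h
    simpa [cls] using h
  have hk_le_n : k ≤ n := by
    calc k = ∑ _i : Fin k, 1 := by simp
      _ ≤ ∑ i, (cls p i).card := Finset.sum_le_sum fun i _ => hclsne i
      _ = n := hsizes
  have hM : ∀ i, ((cls p i).card : ℝ) ≤ 2 * n / k := by
    intro i
    have h1 : (cls p i).card ≤ n / k + 1 := by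
      have := hPequi.card_part_le_average_add_one (hclsmem i)
      simpa [Finset.card_univ] using this
    have h2 : ((cls p i).card : ℝ) ≤ ((n/k : ℕ) : ℝ) + 1 := by exact_mod_cast h1
    have h3 : ((n/k : ℕ) : ℝ) ≤ (n:ℝ)/k := Nat.cast_div_le
    have h4 : (1:ℝ) ≤ (n:ℝ)/k :=
      (one_le_div (by exact_mod_cast hk0)).2 (by exact_mod_cast hk_le_n)
    have : 2 * (n:ℝ) / k = (n:ℝ)/k + (n:ℝ)/k := by ring
    linarith
  have hM0 : (0:ℝ) ≤ 2 * n / k := by positivity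
  -- the set version of the cut-norm bound
  have hST : ∀ S T : Finset (Fin n),
      |∑ x ∈ S, ∑ y ∈ T, (adj01 Γ x y - (blowup Γ p).w x y)| ≤ γ * (n:ℝ)^2 := by
    intro S T
    set A : Fin k → Finset (Fin n) := fun i => S.filter fun x => p x = i with hAdef
    set B : Fin k → Finset (Fin n) := fun j => T.filter fun y => p y = j with hBdef
    have hAsub : ∀ i, A i ⊆ cls p i := by
      intro i x hx
      simp only [cls, Finset.mem_filter, Finset.mem_univ, true_and]
      exact (Finset.mem_filter.1 hx).2
    have hBsub : ∀ j, B j ⊆ cls p j := by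
      intro j y hy
      simp only [cls, Finset.mem_filter, Finset.mem_univ, true_and]
      exact (Finset.mem_filter.1 hy).2
    have hdecomp : ∑ x ∈ S, ∑ y ∈ T, (adj01 Γ x y - (blowup Γ p).w x y)
        = ∑ i, ∑ j, ∑ x ∈ A i, ∑ y ∈ B j, (adj01 Γ x y - (reduced Γ p).w i j) := by
      rw [← Finset.sum_fiberwise S p (fun x => ∑ y ∈ T, (adj01 Γ x y - (blowup Γ p).w x y))]
      refine Finset.sum_congr rfl fun i _ => ?_
      have h1 : ∀ x ∈ A i, ∑ y ∈ T, (adj01 Γ x y - (blowup Γ p).w x y)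
          = ∑ j, ∑ y ∈ B j, (adj01 Γ x y - (reduced Γ p).w i j) := by
        intro x hx
        have hpx : p x = i := (Finset.mem_filter.1 hx).2
        rw [← Finset.sum_fiberwise T p (fun y => (adj01 Γ x y - (blowup Γ p).w x y))]
        refine Finset.sum_congr rfl fun j _ => Finset.sum_congr rfl fun y hy => ?_
        have hpy : p y = j := (Finset.mem_filter.1 hy).2
        show adj01 Γ x y - (reduced Γ p).w (p x) (p y) = _
        rw [hpx, hpy]
      rw [Finset.sum_congr rfl h1, Finset.sum_comm]
    -- per-pair bound
    have hreq : ∀ i j, (reduced Γ p).w i j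
        = ((Γ.edgeDensity (cls p i) (cls p j) : ℚ) : ℝ) := by
      intro i j
      show (pairCount Γ (cls p i) (cls p j) : ℝ) / _ = _
      rw [aux_edgeDensity_mul Γ (Finset.card_pos.1 (hclsne i)) (Finset.card_pos.1 (hclsne j))]
      have hci : ((cls p i).card : ℝ) ≠ 0 := by
        exact_mod_cast Nat.pos_iff_ne_zero.1 (hclsne i)
      have hcj : ((cls p j).card : ℝ) ≠ 0 := by
        exact_mod_cast Nat.pos_iff_ne_zero.1 (hclsne j)
      field_simp
    have hpair : ∀ i j, |∑ x ∈ A i, ∑ y ∈ B j, (adj01 Γ x y - (reduced Γ p).w i j)|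
        ≤ ε * (cls p i).card * (cls p j).card
          + (if i = j ∨ (i ≠ j ∧ ¬ Γ.IsUniform ε (cls p i) (cls p j))
              then ((cls p i).card : ℝ) * (cls p j).card else 0) := by
      intro i j
      by_cases hbad : i = j ∨ (i ≠ j ∧ ¬ Γ.IsUniform ε (cls p i) (cls p j))
      · rw [if_pos hbad]
        have hc := aux_crude_bound Γ (A i) (B j) _ ((reduced Γ p).nonneg i j)
          ((reduced Γ p).le_one i j)
        have hA' : ((A i).card : ℝ) ≤ (cls p i).card := by
          exact_mod_cast Finset.card_le_card (hAsub i)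
        have hB' : ((B j).card : ℝ) ≤ (cls p j).card := by
          exact_mod_cast Finset.card_le_card (hBsub j)
        have h1 : ((A i).card : ℝ) * (B j).card ≤ ((cls p i).card : ℝ) * (cls p j).card :=
          mul_le_mul hA' hB' (Nat.cast_nonneg _) (Nat.cast_nonneg _)
        have h2 : (0:ℝ) ≤ ε * (cls p i).card * (cls p j).card :=
          mul_nonneg (mul_nonneg hε.le (Nat.cast_nonneg _)) (Nat.cast_nonneg _)
        linarith
      · rw [if_neg hbad]
        push_neg at hbad
        have hij : i ≠ j := fun h => (hbad.1 h).elim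
        have huni : Γ.IsUniform ε (cls p i) (cls p j) := hbad.2 hij
        rw [hreq i j, add_zero]
        exact aux_uniform_pair_bound Γ hε (hAsub i) (hBsub j) huni
    -- summing up
    have htri : |∑ i, ∑ j, ∑ x ∈ A i, ∑ y ∈ B j, (adj01 Γ x y - (reduced Γ p).w i j)|
        ≤ ∑ i, ∑ j, |∑ x ∈ A i, ∑ y ∈ B j, (adj01 Γ x y - (reduced Γ p).w i j)| :=
      (Finset.abs_sum_le_sum_abs _ _).trans
        (Finset.sum_le_sum fun i _ => Finset.abs_sum_le_sum_abs _ _)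
    have hsum1 : ∑ i, ∑ j, (ε * ((cls p i).card : ℝ) * (cls p j).card) = ε * (n:ℝ)^2 := by
      have : ∑ i, ∑ j, (ε * ((cls p i).card : ℝ) * (cls p j).card)
          = ε * ((∑ i, ((cls p i).card : ℝ)) * (∑ j, ((cls p j).card : ℝ))) := by
        rw [Finset.sum_mul_sum]
        rw [Finset.mul_sum]
        refine Finset.sum_congr rfl fun i _ => ?_
        rw [Finset.mul_sum]
        exact Finset.sum_congr rfl fun j _ => by ring
      rw [this]
      have hs : ∑ i, ((cls p i).card : ℝ) = (n:ℝ) := by exact_mod_cast hsizes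
      rw [hs]; ring
    -- bad pairs
    set Bad : Finset (Fin k × Fin k) := Finset.univ.filter
      (fun ij : Fin k × Fin k => ij.1 = ij.2 ∨
        (ij.1 ≠ ij.2 ∧ ¬ Γ.IsUniform ε (cls p ij.1) (cls p ij.2))) with hBaddef
    have hbadcard : (Bad.card : ℝ) ≤ k + ε * k^2 := by
      have hsplit : Bad ⊆ (Finset.univ.filter (fun ij : Fin k × Fin k => ij.1 = ij.2)) ∪
          (Finset.univ.filter (fun ij : Fin k × Fin k =>
            ij.1 ≠ ij.2 ∧ ¬ Γ.IsUniform ε (cls p ij.1) (cls p ij.2))) := by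
        rw [hBaddef, ← Finset.filter_or]
      have hdiag : (Finset.univ.filter (fun ij : Fin k × Fin k => ij.1 = ij.2)).card = k := by
        have : (Finset.univ.filter (fun ij : Fin k × Fin k => ij.1 = ij.2))
            = Finset.univ.image (fun i : Fin k => (i, i)) := by
          ext ij
          simp only [Finset.mem_filter, Finset.mem_univ, true_and, Finset.mem_image]
          constructor
          · intro h; exact ⟨ij.1, Prod.ext rfl h⟩
          · rintro ⟨i, rfl⟩; rfl
        rw [this, Finset.card_image_of_injective _ (fun a b hab => (Prod.ext_iff.1 hab).1)]
        simp
      have hnonu : (Finset.univ.filter (fun ij : Fin k × Fin k =>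
          ij.1 ≠ ij.2 ∧ ¬ Γ.IsUniform ε (cls p ij.1) (cls p ij.2))).card
          ≤ (P.nonUniforms Γ ε).card := by
        refine Finset.card_le_card_of_injOn
          (fun ij => (cls p ij.1, cls p ij.2)) ?_ ?_
        · intro ij hij
          simp only [Finset.mem_coe, Finset.mem_filter, Finset.mem_univ, true_and] at hij
          simp only [Finset.mem_coe, Finpartition.mk_mem_nonUniforms]
          exact ⟨hclsmem _, hclsmem _, fun h => hij.1 (hclsinj h), hij.2⟩
        · intro ij _ ij' _ h
          have h1 := Prod.ext_iff.1 h
          exact Prod.ext (hclsinj h1.1) (hclsinj h1.2)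
      have hPuni' : ((P.nonUniforms Γ ε).card : ℝ) ≤ (k * (k-1) : ℕ) * ε := hPuni
      have hkk : ((k * (k-1) : ℕ) : ℝ) ≤ (k:ℝ)^2 := by
        have : (k * (k-1) : ℕ) ≤ k * k := Nat.mul_le_mul_left _ (Nat.sub_le _ _)
        calc ((k * (k-1) : ℕ) : ℝ) ≤ ((k * k : ℕ) : ℝ) := by exact_mod_cast this
          _ = (k:ℝ)^2 := by push_cast; ring
      have hcard1 : (Bad.card : ℝ) ≤
          ((Finset.univ.filter (fun ij : Fin k × Fin k => ij.1 = ij.2)).card : ℝ) +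
          ((Finset.univ.filter (fun ij : Fin k × Fin k =>
            ij.1 ≠ ij.2 ∧ ¬ Γ.IsUniform ε (cls p ij.1) (cls p ij.2))).card : ℝ) := by
        exact_mod_cast (Finset.card_le_card hsplit).trans (Finset.card_union_le _ _)
      rw [hdiag] at hcard1
      have hn2 : ((Finset.univ.filter (fun ij : Fin k × Fin k =>
          ij.1 ≠ ij.2 ∧ ¬ Γ.IsUniform ε (cls p ij.1) (cls p ij.2))).card : ℝ)
          ≤ (k:ℝ)^2 * ε := by
        calc ((Finset.univ.filter (fun ij : Fin k × Fin k =>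
            ij.1 ≠ ij.2 ∧ ¬ Γ.IsUniform ε (cls p ij.1) (cls p ij.2))).card : ℝ)
            ≤ ((P.nonUniforms Γ ε).card : ℝ) := by exact_mod_cast hnonu
          _ ≤ ((k * (k-1) : ℕ) : ℝ) * ε := hPuni'
          _ ≤ (k:ℝ)^2 * ε := mul_le_mul_of_nonneg_right hkk hε.le
      nlinarith
    have hsum2 : ∑ i, ∑ j,
        (if (fun ij : Fin k × Fin k => ij.1 = ij.2 ∨
            (ij.1 ≠ ij.2 ∧ ¬ Γ.IsUniform ε (cls p ij.1) (cls p ij.2))) (i, j)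
          then ((cls p i).card : ℝ) * (cls p j).card else 0)
        ≤ (Bad.card : ℝ) * (2 * n / k)^2 := by
      have hstep : ∀ i j : Fin k,
          (if (fun ij : Fin k × Fin k => ij.1 = ij.2 ∨
              (ij.1 ≠ ij.2 ∧ ¬ Γ.IsUniform ε (cls p ij.1) (cls p ij.2))) (i, j)
            then ((cls p i).card : ℝ) * (cls p j).card else 0)
          ≤ (if (fun ij : Fin k × Fin k => ij.1 = ij.2 ∨
              (ij.1 ≠ ij.2 ∧ ¬ Γ.IsUniform ε (cls p ij.1) (cls p ij.2))) (i, j)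
            then (2 * (n:ℝ) / k)^2 else 0) := by
        intro i j
        split
        · calc ((cls p i).card : ℝ) * (cls p j).card ≤ (2*(n:ℝ)/k) * (2*(n:ℝ)/k) :=
              mul_le_mul (hM i) (hM j) (Nat.cast_nonneg _) hM0
            _ = (2*(n:ℝ)/k)^2 := by ring
        · exact le_rfl
      calc ∑ i, ∑ j,
          (if (fun ij : Fin k × Fin k => ij.1 = ij.2 ∨
              (ij.1 ≠ ij.2 ∧ ¬ Γ.IsUniform ε (cls p ij.1) (cls p ij.2))) (i, j)
            then ((cls p i).card : ℝ) * (cls p j).card else 0)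
          ≤ ∑ i, ∑ j,
          (if (fun ij : Fin k × Fin k => ij.1 = ij.2 ∨
              (ij.1 ≠ ij.2 ∧ ¬ Γ.IsUniform ε (cls p ij.1) (cls p ij.2))) (i, j)
            then (2 * (n:ℝ) / k)^2 else 0) :=
          Finset.sum_le_sum fun i _ => Finset.sum_le_sum fun j _ => hstep i j
        _ = ∑ ij ∈ (Finset.univ ×ˢ Finset.univ : Finset (Fin k × Fin k)),
            (if ij.1 = ij.2 ∨
              (ij.1 ≠ ij.2 ∧ ¬ Γ.IsUniform ε (cls p ij.1) (cls p ij.2))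
            then (2 * (n:ℝ) / k)^2 else 0) := by
              rw [Finset.sum_product]
        _ = ∑ ij ∈ (Finset.univ : Finset (Fin k × Fin k)),
            (if ij.1 = ij.2 ∨
              (ij.1 ≠ ij.2 ∧ ¬ Γ.IsUniform ε (cls p ij.1) (cls p ij.2))
            then (2 * (n:ℝ) / k)^2 else 0) := by rw [Finset.univ_product_univ]
        _ = ∑ _ij ∈ Bad, (2 * (n:ℝ) / k)^2 := (Finset.sum_filter _ _).symm
        _ = (Bad.card : ℝ) * (2 * n / k)^2 := by
            rw [Finset.sum_const, nsmul_eq_mul]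
    -- put everything together
    have hkR : (0:ℝ) < (k:ℝ) := by exact_mod_cast hk0
    have h8 : (8:ℝ) ≤ γ * k := by
      have h1 : (8:ℝ)/γ ≤ (k:ℝ) := hl8.trans (by exact_mod_cast hlk)
      rw [div_le_iff₀ hγ] at h1
      linarith
    have hbound2 : (Bad.card : ℝ) * (2 * n / k)^2 ≤ ((k:ℝ) + ε * k^2) * (2 * n / k)^2 :=
      mul_le_mul_of_nonneg_right hbadcard (by positivity)
    have hexp : ((k:ℝ) + ε * k^2) * (2 * (n:ℝ) / k)^2 = 4 * (n:ℝ)^2 / k + 4 * ε * n^2 := by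
      field_simp
      ring
    have h4 : 4 * (n:ℝ)^2 / k ≤ (γ/2) * n^2 := by
      rw [div_le_iff₀ hkR]
      nlinarith [sq_nonneg (n:ℝ)]
    have hsplitsum : ∑ i, ∑ j,
        (ε * ((cls p i).card : ℝ) * (cls p j).card
          + (if (fun ij : Fin k × Fin k => ij.1 = ij.2 ∨
              (ij.1 ≠ ij.2 ∧ ¬ Γ.IsUniform ε (cls p ij.1) (cls p ij.2))) (i, j)
            then ((cls p i).card : ℝ) * (cls p j).card else 0))
        = (∑ i, ∑ j, (ε * ((cls p i).card : ℝ) * (cls p j).card))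
          + ∑ i, ∑ j,
          (if (fun ij : Fin k × Fin k => ij.1 = ij.2 ∨
              (ij.1 ≠ ij.2 ∧ ¬ Γ.IsUniform ε (cls p ij.1) (cls p ij.2))) (i, j)
            then ((cls p i).card : ℝ) * (cls p j).card else 0) := by
      rw [← Finset.sum_add_distrib]
      exact Finset.sum_congr rfl fun i _ => by rw [← Finset.sum_add_distrib]
    have hfinal : |∑ x ∈ S, ∑ y ∈ T, (adj01 Γ x y - (blowup Γ p).w x y)|
        ≤ ε * (n:ℝ)^2 + (Bad.card : ℝ) * (2 * n / k)^2 := by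
      rw [hdecomp]
      refine htri.trans ?_
      calc ∑ i, ∑ j, |∑ x ∈ A i, ∑ y ∈ B j, (adj01 Γ x y - (reduced Γ p).w i j)|
          ≤ ∑ i, ∑ j,
          (ε * ((cls p i).card : ℝ) * (cls p j).card
            + (if (fun ij : Fin k × Fin k => ij.1 = ij.2 ∨
                (ij.1 ≠ ij.2 ∧ ¬ Γ.IsUniform ε (cls p ij.1) (cls p ij.2))) (i, j)
              then ((cls p i).card : ℝ) * (cls p j).card else 0)) :=
            Finset.sum_le_sum fun i _ => Finset.sum_le_sum fun j _ => hpair i j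
        _ ≤ ε * (n:ℝ)^2 + (Bad.card : ℝ) * (2 * n / k)^2 := by
            rw [hsplitsum, hsum1]
            exact (add_le_add_iff_left _).2 hsum2
    have hγε : ε * (n:ℝ)^2 + (4 * (n:ℝ)^2 / k + 4 * ε * n^2) ≤ γ * (n:ℝ)^2 := by
      have hn2 : (0:ℝ) ≤ (n:ℝ)^2 := sq_nonneg _
      rw [hεdef]
      nlinarith
    calc |∑ x ∈ S, ∑ y ∈ T, (adj01 Γ x y - (blowup Γ p).w x y)|
        ≤ ε * (n:ℝ)^2 + (Bad.card : ℝ) * (2 * n / k)^2 := hfinal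
      _ ≤ ε * (n:ℝ)^2 + (4 * (n:ℝ)^2 / k + 4 * ε * n^2) := by
          rw [← hexp]; exact (add_le_add_iff_left _).2 hbound2
      _ ≤ γ * (n:ℝ)^2 := hγε
  -- conclude
  refine ⟨k, le_trans hlk₀ hlk, hPcard, p, hequip, ?_⟩
  unfold IsFKRegular dCut
  refine Real.sSup_le ?_ hγ.le
  rintro x ⟨α, β, hα, hβ, rfl⟩
  have hb := aux_abs_bilinear_le
    (fun u v => (toWeighted Γ).w u v - (blowup Γ p).w u v) (γ * (n:ℝ)^2) hST α β hα hβ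
  rw [Fintype.card_fin]
  have hn2 : (0:ℝ) < (n:ℝ)^2 := by
    have : (0:ℝ) < (n:ℝ) := by exact_mod_cast hn0
    positivity
  rw [div_le_iff₀ hn2]
  exact hb
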